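/- arXiv:1711.11104 — 3 statements merged into one kernel-verified Lean document; each statement's English description precedes it below -/
import Mathlib

section
/- Let d : C → C be a k-derivation. Then there exists a k-derivation D : B → B such that p ∘ D ∘ q = d if and only if there exists a k-linear map α : E → E such that for all x ∈ E and c ∈ C one has (C1) x·d(c) = α(x)·c − α(x·c) and (C2) d(c)·x = c·α(x) − α(c·x). -/
/-- **Lemma 2.3** (criterion for surjectivity of the first Hochschild projection morphism,
at the level of derivations): a `k`-derivation `d : C → C` lifts to a `k`-derivation
`D` of the trivial extension `B = C ⋉ E` with `p ∘ D ∘ q = d` if and only if there is a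
`k`-linear map `α : E → E` satisfying
(C1) `x·d(c) = α(x)·c − α(x·c)` and (C2) `d(c)·x = c·α(x) − α(c·x)` for all `x ∈ E`, `c ∈ C`. -/
theorem hochschild_projection_lift_criterion
    (k C E : Type*) [Field k] [Ring C] [Algebra k C]
    [AddCommGroup E] [Module k E] [Module C E] [Module Cᵐᵒᵖ E]
    [SMulCommClass C Cᵐᵒᵖ E] [IsScalarTower k C E] [IsScalarTower k Cᵐᵒᵖ E]
    (d : C →ₗ[k] C) (hd : ∀ a b : C, d (a * b) = a * d b + d a * b) :
    (∃ D : TrivSqZeroExt C E →ₗ[k] TrivSqZeroExt C E,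
        (∀ a b : TrivSqZeroExt C E, D (a * b) = a * D b + D a * b) ∧
        ∀ c : C, (D (TrivSqZeroExt.inl c)).fst = d c) ↔
      (∃ α : E →ₗ[k] E,
        (∀ (x : E) (c : C),
            MulOpposite.op (d c) • x = MulOpposite.op c • α x - α (MulOpposite.op c • x)) ∧
        (∀ (x : E) (c : C), d c • x = c • α x - α (c • x))) := by
  constructor
  · rintro ⟨D, hD, hDq⟩
    -- α x := -(D (inr x)).snd
    refine ⟨{ toFun := fun x => -(D (TrivSqZeroExt.inr x)).snd,
              map_add' := fun x y => by simp [TrivSqZeroExt.snd_add]; abel,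
              map_smul' := fun r x => by
                show -(D (TrivSqZeroExt.inr (r • x))).snd
                    = r • -(D (TrivSqZeroExt.inr x)).snd
                rw [TrivSqZeroExt.inr_smul, map_smul,
                  TrivSqZeroExt.snd_smul, smul_neg] }, ?_, ?_⟩
    · intro x c
      have h := hD (TrivSqZeroExt.inr x) (TrivSqZeroExt.inl c)
      rw [TrivSqZeroExt.inr_mul_inl] at h
      have h2 := congrArg TrivSqZeroExt.snd h
      simp only [TrivSqZeroExt.snd_add, TrivSqZeroExt.snd_mul, TrivSqZeroExt.fst_inr,
        TrivSqZeroExt.snd_inr, TrivSqZeroExt.fst_inl, TrivSqZeroExt.snd_inl,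
        smul_zero, zero_add, zero_smul, add_zero, MulOpposite.op_zero, hDq] at h2
      simp only [LinearMap.coe_mk, AddHom.coe_mk]
      rw [smul_neg, sub_neg_eq_add, h2]
      abel
    · intro x c
      have h := hD (TrivSqZeroExt.inl c) (TrivSqZeroExt.inr x)
      rw [TrivSqZeroExt.inl_mul_inr] at h
      have h2 := congrArg TrivSqZeroExt.snd h
      simp only [TrivSqZeroExt.snd_add, TrivSqZeroExt.snd_mul, TrivSqZeroExt.fst_inr,
        TrivSqZeroExt.snd_inr, TrivSqZeroExt.fst_inl, TrivSqZeroExt.snd_inl,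
        smul_zero, zero_add, zero_smul, add_zero, MulOpposite.op_zero, hDq] at h2
      simp only [LinearMap.coe_mk, AddHom.coe_mk]
      rw [smul_neg, sub_neg_eq_add, h2]
      abel
  · rintro ⟨α, hC1, hC2⟩
    refine ⟨{ toFun := fun b => TrivSqZeroExt.inl (d b.fst) + TrivSqZeroExt.inr (-(α b.snd)),
              map_add' := ?_, map_smul' := ?_ }, ?_, ?_⟩
    · intro a b
      ext
      · simp
      · simp; abel
    · intro r b
      ext <;>
        simp [TrivSqZeroExt.fst_smul, TrivSqZeroExt.snd_smul]
    · intro a b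
      ext
      · simp [TrivSqZeroExt.fst_mul, hd]
      · simp only [LinearMap.coe_mk, AddHom.coe_mk, TrivSqZeroExt.snd_add,
          TrivSqZeroExt.snd_mul, TrivSqZeroExt.fst_mul, TrivSqZeroExt.fst_add,
          TrivSqZeroExt.fst_inl, TrivSqZeroExt.fst_inr, TrivSqZeroExt.snd_inl,
          TrivSqZeroExt.snd_inr, map_add, map_neg, smul_neg, zero_add, add_zero]
        have h1 := hC1 a.snd b.fst
        have h2 := hC2 b.snd a.fst
        rw [eq_sub_iff_add_eq] at h1 h2
        rw [neg_add, ← h1, ← h2]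
        abel
    · intro c
      simp
end

section
/- Let E', E'' be sub-bimodules of E with E = E' ⊕ E'' (internal direct sum of C-C-bimodules). Suppose that every k-derivation d : C → C lifts to the trivial extension C ⋉ E, i.e., there exists a k-derivation D : C ⋉ E → C ⋉ E with p ∘ D ∘ q = d. Then every k-derivation d : C → C lifts to the trivial extension C ⋉ E', i.e., there exists a k-derivation D' : C ⋉ E' → C ⋉ E' with p' ∘ D' ∘ q' = d, where p', q' are the canonical projection and inclusion for C ⋉ E'. -/
/-- **Lemma 2.4** at the level of derivations: if `E = E' ⊕ E''` is a direct sum of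
`C`-`C`-bimodules (formalized as the external direct sum `E' × E''`) and every
`k`-derivation of `C` lifts to a `k`-derivation of the trivial extension `C ⋉ E`
(through the canonical projection `p` and inclusion `q`), then every `k`-derivation of
`C` lifts to a `k`-derivation of the partial extension `C ⋉ E'`. -/
theorem derivations_lift_to_partial_extension
    (k C E' E'' : Type*) [Field k] [Ring C] [Algebra k C]
    [AddCommGroup E'] [Module k E'] [Module C E'] [Module Cᵐᵒᵖ E']
    [SMulCommClass C Cᵐᵒᵖ E'] [IsScalarTower k C E'] [IsScalarTower k Cᵐᵒᵖ E']
    [AddCommGroup E''] [Module k E''] [Module C E''] [Module Cᵐᵒᵖ E'']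
    [SMulCommClass C Cᵐᵒᵖ E''] [IsScalarTower k C E''] [IsScalarTower k Cᵐᵒᵖ E'']
    (hlift : ∀ d : C →ₗ[k] C, (∀ a b : C, d (a * b) = a * d b + d a * b) →
      ∃ D : TrivSqZeroExt C (E' × E'') →ₗ[k] TrivSqZeroExt C (E' × E''),
        (∀ a b : TrivSqZeroExt C (E' × E''), D (a * b) = a * D b + D a * b) ∧
        ∀ c : C, (D (TrivSqZeroExt.inl c)).fst = d c) :
    ∀ d : C →ₗ[k] C, (∀ a b : C, d (a * b) = a * d b + d a * b) →
      ∃ D' : TrivSqZeroExt C E' →ₗ[k] TrivSqZeroExt C E',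
        (∀ a b : TrivSqZeroExt C E', D' (a * b) = a * D' b + D' a * b) ∧
        ∀ c : C, (D' (TrivSqZeroExt.inl c)).fst = d c := by
  intro d hd
  obtain ⟨D, hD, hDq⟩ := hlift d hd
  -- inclusion ι : C ⋉ E' → C ⋉ (E' × E'')
  let ι : TrivSqZeroExt C E' →ₗ[k] TrivSqZeroExt C (E' × E'') :=
    { toFun := fun x => TrivSqZeroExt.inl x.fst + TrivSqZeroExt.inr (x.snd, 0)
      map_add' := fun x y => by
        ext <;> simp [TrivSqZeroExt.fst_add, TrivSqZeroExt.snd_add]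
      map_smul' := fun c x => by
        ext <;> simp }
  -- projection π : C ⋉ (E' × E'') → C ⋉ E'
  let π : TrivSqZeroExt C (E' × E'') →ₗ[k] TrivSqZeroExt C E' :=
    { toFun := fun x => TrivSqZeroExt.inl x.fst + TrivSqZeroExt.inr x.snd.1
      map_add' := fun x y => by
        ext <;> simp [TrivSqZeroExt.fst_add, TrivSqZeroExt.snd_add]
      map_smul' := fun c x => by
        ext <;> simp }
  have hι : ∀ a b : TrivSqZeroExt C E', ι (a * b) = ι a * ι b := by
    intro a b
    ext <;> simp [ι, TrivSqZeroExt.fst_mul, TrivSqZeroExt.snd_mul]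
  have hπ : ∀ a b : TrivSqZeroExt C (E' × E''), π (a * b) = π a * π b := by
    intro a b
    ext <;> simp [π, TrivSqZeroExt.fst_mul, TrivSqZeroExt.snd_mul]
  refine ⟨π ∘ₗ D ∘ₗ ι, fun a b => ?_, fun c => ?_⟩
  · have : (π ∘ₗ D ∘ₗ ι) (a * b) = π (ι a * D (ι b) + D (ι a) * ι b) := by
      simp only [LinearMap.comp_apply, hι, hD]
    rw [this, map_add, hπ, hπ]
    have ha : π (ι a) = a := by ext <;> simp [ι, π]
    have hb : π (ι b) = b := by ext <;> simp [ι, π]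
    simp [LinearMap.comp_apply, ha, hb]
  · have : ι (TrivSqZeroExt.inl c) = TrivSqZeroExt.inl c := by
      ext <;> simp [ι]
    simp only [LinearMap.comp_apply, this]
    simpa [π] using hDq c
end

section
/- Let D : B → B be any k-derivation of the trivial extension B = C ⋉ E, and define g : E → C by g(x) = p(D(0,x)). Then g is a morphism of C-C-bimodules (g(c·x) = c·g(x) and g(x·c) = g(x)·c for all c ∈ C, x ∈ E) and satisfies x·g(y) + g(x)·y = 0 in E for all x, y ∈ E; that is, g belongs to 𝓔(E,C). -/
/-- For any `k`-derivation `D : B → B` of the trivial extension `B = C ⋉ E`, the map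
`g : E → C` defined by `g(x) = p(D(0,x))` is a morphism of `C`-`C`-bimodules and
satisfies `x·g(y) + g(x)·y = 0` in `E` for all `x, y ∈ E`; that is, `g ∈ 𝓔(E,C)`. -/
theorem derivation_gives_bimodule_map
    (k C E : Type*) [Field k] [Ring C] [Algebra k C]
    [AddCommGroup E] [Module k E] [Module C E] [Module Cᵐᵒᵖ E]
    [SMulCommClass C Cᵐᵒᵖ E] [IsScalarTower k C E] [IsScalarTower k Cᵐᵒᵖ E]
    (D : TrivSqZeroExt C E →ₗ[k] TrivSqZeroExt C E)
    (hD : ∀ a b : TrivSqZeroExt C E, D (a * b) = a * D b + D a * b) :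
    ∃ g : E →ₗ[k] C,
      (∀ x : E, g x = (D (TrivSqZeroExt.inr x)).fst) ∧
      (∀ (c : C) (x : E), g (c • x) = c * g x) ∧
      (∀ (c : C) (x : E), g (MulOpposite.op c • x) = g x * c) ∧
      (∀ x y : E, MulOpposite.op (g y) • x + g x • y = 0) := by
  refine ⟨{ toFun := fun x => (D (TrivSqZeroExt.inr x)).fst
            map_add' := fun x y => by
              simp [TrivSqZeroExt.inr_add, map_add, TrivSqZeroExt.fst_add]
            map_smul' := fun r x => by
              show (D (TrivSqZeroExt.inr (r • x))).fst = r • (D (TrivSqZeroExt.inr x)).fst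
              rw [TrivSqZeroExt.inr_smul, map_smul, TrivSqZeroExt.fst_smul] }, fun x => rfl, ?_, ?_, ?_⟩
  · intro c x
    have h : (TrivSqZeroExt.inr (c • x) : TrivSqZeroExt C E) =
        TrivSqZeroExt.inl c * TrivSqZeroExt.inr x := by
      ext <;> simp
    simp only [LinearMap.coe_mk, AddHom.coe_mk, h, hD, TrivSqZeroExt.fst_add,
      TrivSqZeroExt.fst_mul, TrivSqZeroExt.fst_inl, TrivSqZeroExt.fst_inr,
      mul_zero, add_zero]
  · intro c x
    have h : (TrivSqZeroExt.inr (MulOpposite.op c • x) : TrivSqZeroExt C E) =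
        TrivSqZeroExt.inr x * TrivSqZeroExt.inl c := by
      ext <;> simp
    simp only [LinearMap.coe_mk, AddHom.coe_mk, h, hD, TrivSqZeroExt.fst_add,
      TrivSqZeroExt.fst_mul, TrivSqZeroExt.fst_inl, TrivSqZeroExt.fst_inr,
      zero_mul, zero_add]
  · intro x y
    have h := hD (TrivSqZeroExt.inr x) (TrivSqZeroExt.inr y)
    rw [TrivSqZeroExt.inr_mul_inr, map_zero] at h
    have h2 := congrArg TrivSqZeroExt.snd h.symm
    simpa [TrivSqZeroExt.snd_mul] using h2
end
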